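/- arXiv:2301.09699 — 5 statements merged into one kernel-verified Lean document; each statement's English description precedes it below -/
import Mathlib

section
/- For every real number x > 0, the series ∑_{n=0}^∞ |C(x,n)| converges, where C(x,n) is the generalized binomial coefficient. -/
/-- The generalized binomial coefficient `C(x, n) = x (x-1) ⋯ (x-n+1) / n!`. -/
noncomputable def genBinom (x : ℝ) (n : ℕ) : ℝ :=
  (∏ i ∈ Finset.range n, (x - i)) / (Nat.factorial n : ℝ)

lemma genBinom_succ (x : ℝ) (n : ℕ) :
    genBinom x (n + 1) = genBinom x n * (x - n) / (n + 1) := by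
  unfold genBinom
  rw [Finset.prod_range_succ, Nat.factorial_succ]
  push_cast
  have h1 : ((Nat.factorial n : ℕ) : ℝ) ≠ 0 := by exact_mod_cast (Nat.factorial_pos n).ne'
  have h2 : (n : ℝ) + 1 ≠ 0 := by positivity
  field_simp

theorem summable_abs_genBinom (x : ℝ) (hx : 0 < x) :
    Summable (fun n : ℕ => |genBinom x n|) := by
  set a : ℕ → ℝ := fun n => |genBinom x n| with ha
  set N := ⌈x⌉₊ with hN
  have key : ∀ n : ℕ, x * a (N + n) =
      ((N + n : ℕ) : ℝ) * a (N + n) - ((N + (n+1) : ℕ) : ℝ) * a (N + (n+1)) := by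
    intro n
    have hxn : x ≤ (N + n : ℕ) := by
      calc x ≤ (N : ℝ) := Nat.le_ceil x
        _ ≤ ((N + n : ℕ) : ℝ) := by exact_mod_cast Nat.le_add_right N n
    have hrec : a (N + n + 1) = a (N + n) * (((N + n : ℕ) : ℝ) - x) / ((N + n : ℕ) + 1) := by
      rw [ha]
      simp only
      rw [genBinom_succ, abs_div, abs_mul]
      rw [abs_of_nonneg (by positivity : (0:ℝ) ≤ ((N + n : ℕ) : ℝ) + 1)]
      rw [abs_sub_comm, abs_of_nonneg (by linarith : (0:ℝ) ≤ ((N + n : ℕ) : ℝ) - x)]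
    have hpos : (0:ℝ) < ((N + n : ℕ) : ℝ) + 1 := by positivity
    have : ((N + (n+1) : ℕ) : ℝ) * a (N + (n+1)) = a (N + n) * (((N + n : ℕ) : ℝ) - x) := by
      have : N + (n + 1) = N + n + 1 := by ring
      rw [this, hrec]
      push_cast
      field_simp
    rw [this]
    ring
  have hanonneg : ∀ n, 0 ≤ a n := fun n => abs_nonneg _
  have hsum : Summable (fun n => a (n + N)) := by
    apply summable_of_sum_range_le (c := ((N : ℝ) * a N) / x)
      (fun n => hanonneg _)
    intro M
    have h1 : ∑ n ∈ Finset.range M, a (n + N) = ∑ n ∈ Finset.range M, a (N + n) := by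
      refine Finset.sum_congr rfl fun i _ => by rw [add_comm]
    rw [h1]
    have h2 : x * ∑ n ∈ Finset.range M, a (N + n) =
        ((N + 0 : ℕ) : ℝ) * a (N + 0) - ((N + M : ℕ) : ℝ) * a (N + M) := by
      rw [Finset.mul_sum]
      rw [show (∑ n ∈ Finset.range M, x * a (N + n)) =
        ∑ n ∈ Finset.range M, ((fun k => ((N + k : ℕ) : ℝ) * a (N + k)) n
          - (fun k => ((N + k : ℕ) : ℝ) * a (N + k)) (n+1)) from
        Finset.sum_congr rfl fun i _ => key i]
      exact Finset.sum_range_sub' _ M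
    have h3 : x * ∑ n ∈ Finset.range M, a (N + n) ≤ (N : ℝ) * a N := by
      rw [h2]
      simp only [Nat.add_zero]
      have : 0 ≤ ((N + M : ℕ) : ℝ) * a (N + M) := by positivity
      linarith
    rw [le_div_iff₀ hx]
    nlinarith [h3]
  exact (summable_nat_add_iff N).mp hsum
end

section
/- The series ∑_{n=2}^∞ (n-2)! · ∑_{k=1}^n (-1)^{k+1} / ((n-k)! · k^k) converges, and -1 plus its sum equals γ, the Euler–Mascheroni constant. -/
open MeasureTheory Set Filter Real Topology Finset

namespace RSEM

lemma texp_mem {t : ℝ} (ht : 0 < t) : 0 < t * Real.exp (-t) ∧ t * Real.exp (-t) ≤ 1 := by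
  constructor
  · positivity
  · rw [Real.exp_neg, ← div_eq_mul_inv, div_le_one (Real.exp_pos t)]
    linarith [Real.add_one_le_exp t]

lemma integrable_exp_neg : IntegrableOn (fun t : ℝ => Real.exp (-t)) (Ioi 0) := by
  have := exp_neg_integrableOn_Ioi 0 (b := 1) one_pos
  simpa using this

lemma integrableOn_base (p : ℕ) :
    IntegrableOn (fun t : ℝ => Real.exp (-t) * (1 - t * Real.exp (-t)) ^ p) (Ioi 0) := by
  refine Integrable.mono integrable_exp_neg ?_ ?_
  · exact (((Real.continuous_exp.comp continuous_neg).mul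
      ((continuous_const.sub (continuous_id.mul
        (Real.continuous_exp.comp continuous_neg))).pow p))).aestronglyMeasurable
  · rw [ae_restrict_iff' measurableSet_Ioi]
    filter_upwards with t ht
    obtain ⟨h1, h2⟩ := texp_mem ht
    have : |1 - t * Real.exp (-t)| ≤ 1 := by rw [abs_le]; constructor <;> linarith
    rw [Real.norm_eq_abs, Real.norm_eq_abs, abs_mul, abs_pow,
      abs_of_pos (Real.exp_pos _)]
    have h3 : |1 - t * Real.exp (-t)| ^ p ≤ 1 := pow_le_one₀ (abs_nonneg _) this
    have := Real.exp_pos (-t)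
    nlinarith [pow_nonneg (abs_nonneg (1 - t * Real.exp (-t))) p]


lemma moment_integrable (j : ℕ) :
    IntegrableOn (fun t : ℝ => Real.exp (-t) * (t * Real.exp (-t)) ^ j) (Ioi 0) := by
  have h := integrableOn_rpow_mul_exp_neg_mul_rpow (s := (j:ℝ)) (p := 1) (b := (j:ℝ)+1)
    (lt_of_lt_of_le neg_one_lt_zero (Nat.cast_nonneg j)) zero_lt_one (by positivity)
  refine h.congr_fun (fun t ht => ?_) measurableSet_Ioi
  beta_reduce
  rw [Real.rpow_one, Real.rpow_natCast, mul_pow, ← Real.exp_nat_mul,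
    show ((j:ℝ) * -t) = -((j:ℝ)*t) by ring,
    show (-((j:ℝ)+1)*t) = (-t) + -((j:ℝ)*t) by ring, Real.exp_add]
  ring

lemma moment (j : ℕ) :
    ∫ t in Ioi 0, Real.exp (-t) * (t * Real.exp (-t)) ^ j
      = (Nat.factorial j : ℝ) / ((j:ℝ) + 1) ^ (j + 1) := by
  have h := Real.integral_rpow_mul_exp_neg_mul_Ioi (a := (j:ℝ)+1) (r := (j:ℝ)+1)
    (by positivity) (by positivity)
  have he : EqOn (fun t : ℝ => Real.exp (-t) * (t * Real.exp (-t)) ^ j)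
      (fun t : ℝ => t ^ (((j:ℝ)+1)-1) * Real.exp (-(((j:ℝ)+1) * t))) (Ioi 0) := by
    intro t ht
    simp only
    rw [show ((j:ℝ)+1-1) = ((j:ℕ):ℝ) by ring, Real.rpow_natCast, mul_pow,
      ← Real.exp_nat_mul, show ((j:ℝ) * -t) = -((j:ℝ)*t) by ring,
      show (-(((j:ℝ)+1)*t)) = (-t) + -((j:ℝ)*t) by ring, Real.exp_add]
    ring
  rw [setIntegral_congr_fun measurableSet_Ioi he, h, Real.Gamma_nat_eq_factorial,
    show ((j:ℝ)+1) = ((j+1:ℕ):ℝ) by push_cast; ring, Real.rpow_natCast]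
  push_cast
  rw [div_pow, one_pow]
  ring


lemma integrable_texp : IntegrableOn (fun t : ℝ => t * Real.exp (-t)) (Ioi 0) := by
  refine (Real.GammaIntegral_convergent (s := 2) two_pos).congr_fun (fun t ht => ?_)
    measurableSet_Ioi
  norm_num [Real.rpow_one, mul_comm]

lemma integral_texp : ∫ t in Ioi 0, t * Real.exp (-t) = 1 := by
  have h := (Real.Gamma_eq_integral (s := 2) two_pos).symm
  rw [setIntegral_congr_fun measurableSet_Ioi
    (g := fun t : ℝ => Real.exp (-t) * t ^ ((2:ℝ) - 1)) (fun t ht => ?_), h]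
  · rw [show (2:ℝ) = ((1:ℕ):ℝ) + 1 by norm_num, Real.Gamma_nat_eq_factorial]
    norm_num
  · norm_num [Real.rpow_one, mul_comm]

lemma integrable_logexp : IntegrableOn (fun t : ℝ => Real.log t * Real.exp (-t)) (Ioi 0) := by
  have hmeas : AEStronglyMeasurable (fun t : ℝ => Real.log t * Real.exp (-t)) :=
    (Real.measurable_log.mul (Real.measurable_exp.comp measurable_neg)).aestronglyMeasurable
  rw [← Ioc_union_Ioi_eq_Ioi (zero_le_one)]
  refine IntegrableOn.union ?_ ?_
  · -- on Ioc 0 1, dominate by 2 * t ^ (-(1/2) : ℝ)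
    have hint : IntegrableOn (fun t : ℝ => 2 * t ^ (-(1/2) : ℝ)) (Ioc 0 1) := by
      have := (intervalIntegral.intervalIntegrable_rpow' (a := 0) (b := 1) (r := -(1/2)) (by norm_num))
      rw [intervalIntegrable_iff_integrableOn_Ioc_of_le zero_le_one] at this
      exact this.const_mul 2
    refine Integrable.mono hint hmeas.restrict ?_
    rw [ae_restrict_iff' measurableSet_Ioc]
    filter_upwards with t ht
    obtain ⟨ht0, ht1⟩ := ht
    have hlog : -Real.log t ≤ 2 * t ^ (-(1/2) : ℝ) := by
      have h1 : Real.log (t ^ (-(1/2) : ℝ)) ≤ t ^ (-(1/2) : ℝ) - 1 :=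
        Real.log_le_sub_one_of_pos (Real.rpow_pos_of_pos ht0 _)
      rw [Real.log_rpow ht0] at h1
      have : (0:ℝ) < t ^ (-(1/2) : ℝ) := Real.rpow_pos_of_pos ht0 _
      nlinarith
    have hlt : Real.log t ≤ 0 := Real.log_nonpos ht0.le ht1
    rw [Real.norm_eq_abs, Real.norm_eq_abs, abs_mul, abs_of_nonpos hlt,
      abs_of_pos (Real.exp_pos _)]
    have he : Real.exp (-t) ≤ 1 := Real.exp_le_one_iff.mpr (by linarith)
    have : (0:ℝ) < t ^ (-(1/2) : ℝ) := Real.rpow_pos_of_pos ht0 _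
    rw [abs_of_pos (by positivity : (0:ℝ) < 2 * t ^ (-(1/2) : ℝ))]
    nlinarith [Real.exp_pos (-t)]
  · -- on Ioi 1, dominate by t * exp (-t)
    refine Integrable.mono (integrable_texp.mono_set (Ioi_subset_Ioi zero_le_one))
      hmeas.restrict ?_
    rw [ae_restrict_iff' measurableSet_Ioi]
    filter_upwards with t ht
    have ht1 : (1:ℝ) < t := ht
    have hlog0 : 0 ≤ Real.log t := Real.log_nonneg ht1.le
    have hlogt : Real.log t ≤ t := by
      have := Real.log_le_sub_one_of_pos (by linarith : (0:ℝ) < t)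
      linarith
    rw [Real.norm_eq_abs, Real.norm_eq_abs, abs_mul, abs_mul, abs_of_nonneg hlog0,
      abs_of_pos (Real.exp_pos _), abs_of_pos (by linarith : (0:ℝ) < t)]
    have := Real.exp_pos (-t)
    nlinarith


lemma integral_logexp :
    ∫ t in Ioi 0, Real.log t * Real.exp (-t) = - Real.eulerMascheroniConstant := by
  set I : ℝ := ∫ t in Ioi 0, Real.log t * Real.exp (-t) with hI
  have h1 := Complex.hasDerivAt_GammaIntegral (s := 1) (by norm_num)
  have hd : (∫ t : ℝ in Ioi 0, (t:ℂ) ^ ((1:ℂ) - 1) * ((Real.log t : ℂ) * (Real.exp (-t) : ℂ)))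
      = (I : ℂ) := by
    simp only [sub_self, Complex.cpow_zero, one_mul, ← Complex.ofReal_mul]
    exact integral_ofReal
  rw [hd] at h1
  have hev : Complex.Gamma =ᶠ[nhds (1:ℂ)] Complex.GammaIntegral := by
    have hopen : IsOpen {s : ℂ | 0 < s.re} := isOpen_lt continuous_const Complex.continuous_re
    filter_upwards [hopen.mem_nhds (by norm_num : (0:ℝ) < (1:ℂ).re)] with s hs
    exact Complex.Gamma_eq_integral hs
  have h2 : HasDerivAt Complex.Gamma (I : ℂ) 1 := h1.congr_of_eventuallyEq hev
  have h3 : HasDerivAt (fun x : ℝ => (Complex.Gamma x).re) ((I:ℂ)).re (1:ℝ) := by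
    apply HasDerivAt.real_of_complex
    simpa using h2
  have h4 : (fun x : ℝ => (Complex.Gamma (x:ℂ)).re) = Real.Gamma := by
    funext x; rw [Complex.Gamma_ofReal, Complex.ofReal_re]
  rw [h4] at h3
  have := h3.unique Real.hasDerivAt_Gamma_one
  simpa using this


lemma termA (m : ℕ) :
    (Nat.factorial m : ℝ) * ∑ k ∈ Finset.Icc 1 (m+2),
        (-1) ^ (k + 1) / ((Nat.factorial (m + 2 - k) : ℝ) * (k : ℝ) ^ k)
      = ∫ t in Ioi 0, Real.exp (-t) * (1 - t * Real.exp (-t)) ^ (m+1) / ((m:ℝ)+1) := by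
  have hint : ∀ t : ℝ, Real.exp (-t) * (1 - t * Real.exp (-t)) ^ (m+1) / ((m:ℝ)+1)
      = ∑ j ∈ Finset.range (m+2),
          ((-1:ℝ)^j * ((m+1).choose j : ℝ) / ((m:ℝ)+1)) * (Real.exp (-t) * (t * Real.exp (-t)) ^ j) := by
    intro t
    rw [show (1 - t * Real.exp (-t)) = (-(t * Real.exp (-t)) + 1) by ring, add_pow,
      Finset.mul_sum, Finset.sum_div]
    refine Finset.sum_congr rfl fun j hj => ?_
    rw [one_pow, neg_pow]
    ring
  simp_rw [hint]
  rw [MeasureTheory.integral_finset_sum _ (fun j hj => ((moment_integrable j).const_mul _))]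
  simp_rw [integral_const_mul, moment]
  -- now reindex LHS
  rw [show Finset.Icc 1 (m+2) = Finset.Ico 1 (m+3) from (Finset.Ico_add_one_right_eq_Icc 1 (m+2)).symm,
    Finset.sum_Ico_eq_sum_range, Finset.mul_sum]
  refine Finset.sum_congr rfl fun j hj => ?_
  rw [Finset.mem_range] at hj
  have hj' : j ≤ m + 1 := by omega
  rw [show m + 2 - (1 + j) = m + 1 - j by omega, show 1 + j = j + 1 by omega]
  have hfac : (((m+1).choose j : ℝ)) * (j.factorial : ℝ) * ((m+1-j).factorial : ℝ)
      = ((m+1).factorial : ℝ) := by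
    exact_mod_cast congrArg (Nat.cast (R := ℝ)) (Nat.choose_mul_factorial_mul_factorial hj')
  have hfs : ((m+1).factorial : ℝ) = ((m:ℝ)+1) * (m.factorial : ℝ) := by
    rw [Nat.factorial_succ]; push_cast; ring
  have h1 : ((m+1-j).factorial : ℝ) ≠ 0 := Nat.cast_ne_zero.mpr (Nat.factorial_ne_zero _)
  have h2 : ((j:ℝ)+1) ^ (j+1) ≠ 0 := by positivity
  have h3 : ((m:ℝ)+1) ≠ 0 := by positivity
  have h4 : ((-1:ℝ))^(j+1+1) = (-1)^j := by
    rw [show j+1+1 = j+2 by omega, pow_add]; norm_num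
  rw [h4]
  push_cast
  field_simp
  linear_combination (-1:ℝ) * (hfac + hfs)


noncomputable def F (M : ℕ) (t : ℝ) : ℝ :=
  Real.exp (-t) * ∑ j ∈ Finset.Icc 1 M, (1 - t * Real.exp (-t)) ^ j / (j : ℝ)

lemma F_eq_sum (M : ℕ) : F M = fun t => ∑ j ∈ Finset.Icc 1 M,
    Real.exp (-t) * (1 - t * Real.exp (-t)) ^ j / (j : ℝ) := by
  funext t
  rw [F, Finset.mul_sum]
  exact Finset.sum_congr rfl fun j _ => by ring

lemma F_integrable (M : ℕ) : IntegrableOn (F M) (Ioi 0) := by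
  rw [F_eq_sum]
  exact MeasureTheory.integrable_finset_sum _
    (fun j hj => (integrableOn_base j).div_const _)

lemma sum_eq_integral (M : ℕ) :
    ∑ n ∈ Finset.Icc 2 (M+1), (Nat.factorial (n - 2) : ℝ) *
        ∑ k ∈ Finset.Icc 1 n,
          (-1) ^ (k + 1) / ((Nat.factorial (n - k) : ℝ) * (k : ℝ) ^ k)
      = ∫ t in Ioi 0, F M t := by
  have hR : ∫ t in Ioi 0, F M t = ∑ j ∈ Finset.Icc 1 M,
      ∫ t in Ioi 0, Real.exp (-t) * (1 - t * Real.exp (-t)) ^ j / (j : ℝ) := by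
    rw [F_eq_sum]
    exact MeasureTheory.integral_finset_sum _
      (fun j hj => (integrableOn_base j).div_const _)
  rw [hR,
    show Finset.Icc 2 (M+1) = Finset.Ico 2 (M+2) from (Finset.Ico_add_one_right_eq_Icc 2 (M+1)).symm,
    Finset.sum_Ico_eq_sum_range,
    show Finset.Icc 1 M = Finset.Ico 1 (M+1) from (Finset.Ico_add_one_right_eq_Icc 1 M).symm,
    Finset.sum_Ico_eq_sum_range]
  refine Finset.sum_congr rfl fun i hi => ?_
  rw [show 2 + i = i + 2 by omega, show i + 2 - 2 = i by omega, termA i,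
    show 1 + i = i + 1 by omega]
  push_cast
  norm_num

lemma F_mono {t : ℝ} (ht : 0 < t) : Monotone fun M => F M t := by
  obtain ⟨h1, h2⟩ := texp_mem ht
  intro a b hab
  simp only [F]
  refine mul_le_mul_of_nonneg_left ?_ (Real.exp_pos (-t)).le
  refine Finset.sum_le_sum_of_subset_of_nonneg (Finset.Icc_subset_Icc_right hab) ?_
  intro j hj hj'
  have : (0:ℝ) ≤ 1 - t * Real.exp (-t) := by linarith
  positivity

lemma F_tendsto {t : ℝ} (ht : 0 < t) :
    Tendsto (fun M => F M t) atTop (𝓝 (Real.exp (-t) * (t - Real.log t))) := by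
  obtain ⟨h1, h2⟩ := texp_mem ht
  set x : ℝ := 1 - t * Real.exp (-t) with hx
  have habs : |x| < 1 := by
    rw [abs_lt, hx]
    constructor <;> linarith
  have hs := Real.hasSum_pow_div_log_of_abs_lt_one habs
  have hlog : -Real.log (1 - x) = t - Real.log t := by
    rw [hx, show (1 - (1 - t * Real.exp (-t))) = t * Real.exp (-t) by ring,
      Real.log_mul (ne_of_gt ht) (Real.exp_ne_zero _), Real.log_exp]
    ring
  rw [hlog] at hs
  have h3 := hs.tendsto_sum_nat
  have h4 : ∀ M, F M t = Real.exp (-t) * ∑ n ∈ Finset.range M, x ^ (n+1) / ((n:ℝ)+1) := by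
    intro M
    rw [F]
    congr 1
    rw [show Finset.Icc 1 M = Finset.Ico 1 (M+1) from (Finset.Ico_add_one_right_eq_Icc 1 M).symm,
      Finset.sum_Ico_eq_sum_range]
    refine Finset.sum_congr rfl fun i hi => ?_
    rw [show 1 + i = i + 1 by omega]
    push_cast
    ring
  simp only [h4]
  have h5 := h3.const_mul (Real.exp (-t))
  simpa [mul_comm] using h5

lemma Flim_integrable :
    IntegrableOn (fun t : ℝ => Real.exp (-t) * (t - Real.log t)) (Ioi 0) :=
by
  refine IntegrableOn.congr_fun (integrable_texp.sub integrable_logexp)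
    (fun t ht => ?_) measurableSet_Ioi
  simp only [Pi.sub_apply]
  ring

lemma Flim_integral :
    ∫ t in Ioi 0, Real.exp (-t) * (t - Real.log t)
      = 1 + Real.eulerMascheroniConstant := by
  have h : ∫ t in Ioi 0, Real.exp (-t) * (t - Real.log t)
      = ∫ t in Ioi 0, (t * Real.exp (-t) - Real.log t * Real.exp (-t)) :=
    setIntegral_congr_fun measurableSet_Ioi (fun t ht => by ring)
  rw [h, MeasureTheory.integral_sub integrable_texp integrable_logexp,
    integral_texp, integral_logexp]
  ring

end RSEM

theorem rational_series_eulerMascheroni :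
    ∃ S : ℝ,
      Filter.Tendsto
        (fun N => ∑ n ∈ Finset.Icc 2 N, (Nat.factorial (n - 2) : ℝ) *
          ∑ k ∈ Finset.Icc 1 n,
            (-1) ^ (k + 1) / ((Nat.factorial (n - k) : ℝ) * (k : ℝ) ^ k))
        Filter.atTop (nhds S) ∧
      -1 + S = Real.eulerMascheroniConstant := by
  refine ⟨1 + Real.eulerMascheroniConstant, ?_, by ring⟩
  have key : Tendsto (fun M : ℕ => ∫ t in Ioi 0, RSEM.F M t) atTop
      (𝓝 (1 + Real.eulerMascheroniConstant)) := by
    rw [← RSEM.Flim_integral]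
    refine MeasureTheory.integral_tendsto_of_tendsto_of_monotone
      (fun M => RSEM.F_integrable M) RSEM.Flim_integrable ?_ ?_
    · rw [ae_restrict_iff' measurableSet_Ioi]
      filter_upwards with t ht
      exact RSEM.F_mono ht
    · rw [ae_restrict_iff' measurableSet_Ioi]
      filter_upwards with t ht
      exact RSEM.F_tendsto ht
  have hN : ∀ N : ℕ, (∑ n ∈ Finset.Icc 2 N, (Nat.factorial (n - 2) : ℝ) *
      ∑ k ∈ Finset.Icc 1 n,
        (-1) ^ (k + 1) / ((Nat.factorial (n - k) : ℝ) * (k : ℝ) ^ k))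
      = ∫ t in Ioi 0, RSEM.F (N - 1) t := by
    intro N
    cases N with
    | zero => simp [RSEM.F]
    | succ M => exact RSEM.sum_eq_integral M
  have h2 := key.comp (tendsto_sub_atTop_nat 1)
  exact h2.congr (fun N => (hN N).symm)
end

section
/- For all integers N ≥ 1 and 1 ≤ k ≤ N, ∑_{n=k}^N (-1)^n · (N+n-1)! / ((n-k)! · (k+n-1)! · (N+1-n)!) = (-1)^N · (2N)! / ((N+k)! · (N+1-k)!). -/
open Finset

private lemma fwdDiff_add_choose (a j : ℕ) :
    fwdDiff 1 (fun x : ℕ ↦ ((x + a).choose (j + 1) : ℤ)) =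
      fun x ↦ ((x + a).choose j : ℤ) := by
  ext n
  simp only [fwdDiff]
  have h : n + 1 + a = (n + a) + 1 := by omega
  rw [h, Nat.choose_succ_succ' (n + a) j]
  push_cast
  ring

private lemma fwdDiff_iter_add_choose (a d : ℕ) :
    (fwdDiff 1)^[d + 1] (fun x : ℕ ↦ ((x + a).choose d : ℤ)) = fun _ ↦ 0 := by
  induction d generalizing a with
  | zero =>
      simp only [Nat.choose_zero_right, Nat.cast_one, Function.iterate_one]
      exact fwdDiff_const 1 (1 : ℤ)
  | succ d ih =>
      rw [Function.iterate_succ_apply, fwdDiff_add_choose a d]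
      exact ih a

private lemma fwdDiff_iter_add_choose_of_lt (a d M : ℕ) (h : d < M) :
    (fwdDiff 1)^[M] (fun x : ℕ ↦ ((x + a).choose d : ℤ)) = fun _ ↦ 0 := by
  obtain ⟨r, rfl⟩ : ∃ r, M = r + (d + 1) := ⟨M - (d + 1), by omega⟩
  rw [Function.iterate_add_apply, fwdDiff_iter_add_choose]
  clear h
  induction r with
  | zero => rfl
  | succ r ih => rw [Function.iterate_succ_apply, fwdDiff_const]; exact ih

private lemma alt_sum_choose (a d M : ℕ) (h : d < M) :
    ∑ m ∈ range (M + 1), (-1 : ℤ) ^ (M - m) * (M.choose m) * ((m + a).choose d) = 0 := by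
  have H := fwdDiff_iter_eq_sum_shift (h := (1 : ℕ)) (fun x : ℕ ↦ ((x + a).choose d : ℤ)) M 0
  rw [fwdDiff_iter_add_choose_of_lt a d M h] at H
  simpa using H.symm

private lemma alt_sum_choose_real (a d M : ℕ) (h : d < M) :
    ∑ m ∈ range (M + 1), (-1 : ℝ) ^ m * (M.choose m) * ((m + a).choose d) = 0 := by
  have H := alt_sum_choose a d M h
  have H2 : ∑ m ∈ range (M + 1), (-1 : ℝ) ^ (M - m) * (M.choose m) * ((m + a).choose d) = 0 := by
    exact_mod_cast H
  have H3 : ∑ m ∈ range (M + 1), (-1 : ℝ) ^ m * (M.choose m) * ((m + a).choose d)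
      = (-1) ^ M * ∑ m ∈ range (M + 1), (-1 : ℝ) ^ (M - m) * (M.choose m) * ((m + a).choose d) := by
    rw [mul_sum]
    refine sum_congr rfl fun m hm ↦ ?_
    have hm' : m ≤ M := by simpa [Nat.lt_succ_iff] using hm
    have hs : (-1 : ℝ) ^ m = (-1) ^ M * (-1) ^ (M - m) := by
      rw [← pow_add]
      have he : M + (M - m) = m + 2 * (M - m) := by omega
      rw [he, pow_add, pow_mul]
      norm_num
    rw [hs]; ring
  rw [H3, H2, mul_zero]

theorem inner_sum_identity (N k : ℕ) (hN : 1 ≤ N) (hk : 1 ≤ k) (hkN : k ≤ N) :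
    ∑ n ∈ Finset.Icc k N,
        (-1 : ℝ) ^ n * (Nat.factorial (N + n - 1) : ℝ) /
          ((Nat.factorial (n - k) : ℝ) * (Nat.factorial (k + n - 1) : ℝ) *
            (Nat.factorial (N + 1 - n) : ℝ)) =
      (-1 : ℝ) ^ N * (Nat.factorial (2 * N) : ℝ) /
        ((Nat.factorial (N + k) : ℝ) * (Nat.factorial (N + 1 - k) : ℝ)) := by
  have key := alt_sum_choose_real (N + k - 1) (N - k) ((N - k) + 1) (by omega)
  have hMd : N + 1 - k = (N - k) + 1 := by omega
  rw [← Finset.Ico_add_one_right_eq_Icc, Finset.sum_Ico_eq_sum_range, hMd]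
  have hterm : ∀ m ∈ Finset.range (N - k + 1),
      (-1 : ℝ) ^ (k + m) * (Nat.factorial (N + (k + m) - 1) : ℝ) /
          ((Nat.factorial (k + m - k) : ℝ) * (Nat.factorial (k + (k + m) - 1) : ℝ) *
            (Nat.factorial (N + 1 - (k + m)) : ℝ)) =
      ((-1 : ℝ) ^ k * (Nat.factorial (N - k) : ℝ) / (Nat.factorial (N - k + 1) : ℝ)) *
        ((-1 : ℝ) ^ m * ((N - k + 1).choose m : ℝ) * ((m + (N + k - 1)).choose (N - k) : ℝ)) := by
    intro m hm
    rw [Finset.mem_range, Nat.lt_succ_iff] at hm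
    have e1 : k + m - k = m := by omega
    have e2 : N + (k + m) - 1 = m + (N + k - 1) := by omega
    have e3 : N + 1 - (k + m) = (N - k + 1) - m := by omega
    rw [e1, e2, e3]
    rw [Nat.cast_choose ℝ (show m ≤ N - k + 1 by omega),
        Nat.cast_choose ℝ (show N - k ≤ m + (N + k - 1) by omega)]
    have e4 : m + (N + k - 1) - (N - k) = k + (k + m) - 1 := by omega
    rw [e4]
    have f1 : (Nat.factorial m : ℝ) ≠ 0 := Nat.cast_ne_zero.mpr (Nat.factorial_ne_zero _)
    have f2 : (Nat.factorial (k + (k + m) - 1) : ℝ) ≠ 0 :=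
      Nat.cast_ne_zero.mpr (Nat.factorial_ne_zero _)
    have f3 : (Nat.factorial ((N - k + 1) - m) : ℝ) ≠ 0 :=
      Nat.cast_ne_zero.mpr (Nat.factorial_ne_zero _)
    have f4 : (Nat.factorial (N - k + 1) : ℝ) ≠ 0 :=
      Nat.cast_ne_zero.mpr (Nat.factorial_ne_zero _)
    have f5 : (Nat.factorial (N - k) : ℝ) ≠ 0 :=
      Nat.cast_ne_zero.mpr (Nat.factorial_ne_zero _)
    field_simp
    ring
  rw [Finset.sum_congr rfl hterm, ← Finset.mul_sum]
  have hsum : ∑ m ∈ Finset.range (N - k + 1),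
      ((-1 : ℝ) ^ m * ((N - k + 1).choose m : ℝ) * ((m + (N + k - 1)).choose (N - k) : ℝ))
      = - ((-1 : ℝ) ^ (N - k + 1) * (((N - k + 1).choose (N - k + 1)) : ℝ) *
          ((((N - k + 1) + (N + k - 1)).choose (N - k)) : ℝ)) := by
    rw [Finset.sum_range_succ] at key
    linarith [key]
  rw [hsum, Nat.choose_self]
  have he : (N - k + 1) + (N + k - 1) = 2 * N := by omega
  rw [he, Nat.cast_choose ℝ (show N - k ≤ 2 * N by omega)]
  have e5 : 2 * N - (N - k) = N + k := by omega
  rw [e5]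
  have hsign : (-1 : ℝ) ^ k * (-1 : ℝ) ^ (N - k) = (-1 : ℝ) ^ N := by
    rw [← pow_add]
    congr 1
    omega
  have f1 : (Nat.factorial (N - k) : ℝ) ≠ 0 := Nat.cast_ne_zero.mpr (Nat.factorial_ne_zero _)
  have f2 : (Nat.factorial (N - k + 1) : ℝ) ≠ 0 := Nat.cast_ne_zero.mpr (Nat.factorial_ne_zero _)
  have f3 : (Nat.factorial (N + k) : ℝ) ≠ 0 := Nat.cast_ne_zero.mpr (Nat.factorial_ne_zero _)
  field_simp
  linear_combination hsign
end

section
/- For every real number x, the series S(x) = ∑_{n=1}^∞ [(-1)^n / (2n-1)] · p_n(x) · ∑_{k=1}^n [(-1)^k · (2k-1) / ((n-k)! · (k+n-1)!)] · ln k converges absolutely, where p_n(x) = x · ∏_{k=1}^{n-1} (x² - k²). -/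
/-- `p_n(x) = x · ∏_{k=1}^{n-1} (x² - k²)`. -/
noncomputable def lambdaP (n : ℕ) (x : ℝ) : ℝ :=
  x * ∏ k ∈ Finset.Icc 1 (n - 1), (x ^ 2 - (k : ℝ) ^ 2)

/-- The `n`-th term of the series `S(x)` defining the `Λ` function. -/
noncomputable def lambdaTerm (n : ℕ) (x : ℝ) : ℝ :=
  ((-1) ^ n / (2 * (n : ℝ) - 1)) * lambdaP n x *
    ∑ k ∈ Finset.Icc 1 n,
      ((-1) ^ k * (2 * (k : ℝ) - 1) /
          ((Nat.factorial (n - k) : ℝ) * (Nat.factorial (k + n - 1) : ℝ))) *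
        Real.log (k : ℝ)

open Finset Real


private lemma fact_pos (m : ℕ) : (0:ℝ) < (Nat.factorial m : ℝ) := by
  exact_mod_cast m.factorial_pos

/-- Telescoping closed form for partial sums of the coefficients. -/
private lemma tele (n : ℕ) (hn : 2 ≤ n) : ∀ i, 1 ≤ i → i ≤ n →
    ∑ k ∈ Finset.Icc 1 i, ((-1:ℝ) ^ k * (2 * (k : ℝ) - 1) /
        ((Nat.factorial (n - k) : ℝ) * (Nat.factorial (k + n - 1) : ℝ)))
    = (-1:ℝ) ^ i * ((i : ℝ) * ((n - i : ℕ) : ℝ)) /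
        (((n:ℝ) - 1) * (Nat.factorial (n - i) : ℝ) * (Nat.factorial (i + n - 1) : ℝ)) := by
  intro i hi1
  induction i, hi1 using Nat.le_induction with
  | base =>
    intro h1n
    rw [show Finset.Icc 1 1 = {1} from rfl, Finset.sum_singleton]
    have h1 : 1 + n - 1 = n := by omega
    rw [h1]
    have hc : ((n - 1 : ℕ) : ℝ) = (n : ℝ) - 1 := by
      push_cast [Nat.cast_sub (by omega : 1 ≤ n)]; ring
    rw [hc]
    have hne : ((n:ℝ) - 1) ≠ 0 := by
      have : (2:ℝ) ≤ (n:ℝ) := by exact_mod_cast hn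
      nlinarith
    field_simp
    ring
  | succ i hi ih =>
    intro hin
    have hin' : i ≤ n := by omega
    have h1i : 1 ≤ i := hi
    rw [Finset.sum_Icc_succ_top (by omega : 1 ≤ i + 1), ih (by omega)]
    -- abbreviations
    set e := n - (i + 1) with he
    have hni : n - i = e + 1 := by omega
    have hipn : i + 1 + n - 1 = (i + n - 1) + 1 := by omega
    have hipn2 : i + n - 1 + 1 = i + n := by omega
    rw [hni, hipn, hipn2]
    have hfe : (Nat.factorial (e + 1) : ℝ) = ((e:ℝ) + 1) * (Nat.factorial e : ℝ) := by
      rw [Nat.factorial_succ]; push_cast; ring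
    have hfin : (Nat.factorial (i + n) : ℝ) = ((i:ℝ) + (n:ℝ)) * (Nat.factorial (i + n - 1) : ℝ) := by
      rw [show i + n = (i + n - 1) + 1 by omega, Nat.factorial_succ]
      push_cast [show (i + n - 1 : ℕ) = i + n - 1 from rfl]
      have : ((i + n - 1 : ℕ) : ℝ) = (i:ℝ) + (n:ℝ) - 1 := by
        have : 1 ≤ i + n := by omega
        push_cast [Nat.cast_sub this]; ring
      rw [this]; ring
    have hN : (n : ℝ) = (e : ℝ) + (i : ℝ) + 1 := by
      have : n = e + (i + 1) := by omega
      exact_mod_cast congrArg (Nat.cast : ℕ → ℝ) this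
    have hcast1 : ((n - (i+1) : ℕ) : ℝ) = (e : ℝ) := by rw [← he]
    have hcast2 : ((e + 1 : ℕ) : ℝ) = (e : ℝ) + 1 := by push_cast; ring
    rw [hcast1, hcast2, hfe, hfin, hN]
    have h1 : (Nat.factorial e : ℝ) ≠ 0 := ne_of_gt (fact_pos e)
    have h2 : (Nat.factorial (i + n - 1) : ℝ) ≠ 0 := ne_of_gt (fact_pos _)
    have h3 : (e:ℝ) + 1 ≠ 0 := by positivity
    have h4 : (e:ℝ) + (i:ℝ) + 1 - 1 ≠ 0 := by
      have : (1:ℝ) ≤ (i:ℝ) := by exact_mod_cast h1i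
      nlinarith [Nat.cast_nonneg (α := ℝ) e]
    have h5 : (i:ℝ) + ((e:ℝ) + (i:ℝ) + 1) ≠ 0 := by positivity
    field_simp
    push_cast
    ring


/-- Pointwise Gaussian-type bound on `1/((n-k)!(k+n-1)!)`. -/
private lemma dd_le (n : ℕ) (hn : 1 ≤ n) : ∀ k, 1 ≤ k → k ≤ n →
    (1:ℝ) / ((Nat.factorial (n - k) : ℝ) * (Nat.factorial (k + n - 1) : ℝ))
      ≤ Real.exp (-((k:ℝ) * ((k:ℝ) - 1)) / (2 * n)) /
        ((Nat.factorial (n - 1) : ℝ) * (Nat.factorial n : ℝ)) := by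
  intro k hk1
  induction k, hk1 using Nat.le_induction with
  | base =>
    intro _
    rw [show 1 + n - 1 = n by omega]
    simp only [Nat.cast_one]
    rw [show -((1:ℝ) * ((1:ℝ) - 1)) / (2 * (n:ℝ)) = 0 by ring, Real.exp_zero]
  | succ k hk ih =>
    intro hkn
    push_cast
    have hkn' : k ≤ n := by omega
    have hn0 : (0:ℝ) < (n:ℝ) := by exact_mod_cast (by omega : 0 < n)
    have hk0 : (0:ℝ) ≤ (k:ℝ) := Nat.cast_nonneg k
    have h2 : k + 1 + n - 1 = (k + n - 1) + 1 := by omega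
    have hfl : (Nat.factorial (n - k) : ℝ)
        = ((n:ℝ) - (k:ℝ)) * (Nat.factorial (n - (k+1)) : ℝ) := by
      rw [show n - k = (n - (k+1)) + 1 by omega, Nat.factorial_succ]
      have : ((n - (k+1) : ℕ) : ℝ) = (n:ℝ) - (k:ℝ) - 1 := by
        push_cast [Nat.cast_sub (by omega : k + 1 ≤ n)]; ring
      push_cast
      rw [this]; ring
    have hfr : (Nat.factorial ((k + n - 1) + 1) : ℝ)
        = ((k:ℝ) + (n:ℝ)) * (Nat.factorial (k + n - 1) : ℝ) := by
      rw [Nat.factorial_succ]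
      have : ((k + n - 1 : ℕ) : ℝ) = (k:ℝ) + (n:ℝ) - 1 := by
        push_cast [Nat.cast_sub (by omega : 1 ≤ k + n)]; ring
      push_cast
      rw [this]; ring
    rw [h2, hfr]
    have hnk_pos : (0:ℝ) < (n:ℝ) - (k:ℝ) := by
      have : (k:ℝ) + 1 ≤ (n:ℝ) := by exact_mod_cast hkn
      linarith
    have hkn_pos : (0:ℝ) < (k:ℝ) + (n:ℝ) := by linarith
    have key : (1:ℝ) / ((Nat.factorial (n - (k+1)) : ℝ) * (((k:ℝ) + (n:ℝ)) * (Nat.factorial (k + n - 1) : ℝ)))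
        = (1 / ((Nat.factorial (n - k) : ℝ) * (Nat.factorial (k + n - 1) : ℝ)))
          * (((n:ℝ) - (k:ℝ)) / ((k:ℝ) + (n:ℝ))) := by
      rw [hfl]
      have := ne_of_gt (fact_pos (n - (k+1)))
      have := ne_of_gt (fact_pos (k + n - 1))
      field_simp
    rw [key]
    have step1 : ((n:ℝ) - (k:ℝ)) / ((k:ℝ) + (n:ℝ)) ≤ Real.exp (-(k:ℝ)/(n:ℝ)) := by
      have e1 : ((n:ℝ) - (k:ℝ)) / ((k:ℝ) + (n:ℝ)) ≤ ((n:ℝ) - (k:ℝ)) / (n:ℝ) := by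
        apply div_le_div_of_nonneg_left hnk_pos.le hn0 (by linarith)
      have e2 : ((n:ℝ) - (k:ℝ)) / (n:ℝ) = 1 + (-(k:ℝ)/(n:ℝ)) := by
        rw [sub_div, div_self (ne_of_gt hn0)]; ring
      have e3 : 1 + (-(k:ℝ)/(n:ℝ)) ≤ Real.exp (-(k:ℝ)/(n:ℝ)) := by
        have := Real.add_one_le_exp (-(k:ℝ)/(n:ℝ))
        linarith
      linarith
    have hpos1 : (0:ℝ) ≤ 1 / ((Nat.factorial (n - k) : ℝ) * (Nat.factorial (k + n - 1) : ℝ)) := by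
      positivity
    calc (1 / ((Nat.factorial (n - k) : ℝ) * (Nat.factorial (k + n - 1) : ℝ)))
          * (((n:ℝ) - (k:ℝ)) / ((k:ℝ) + (n:ℝ)))
        ≤ (Real.exp (-((k:ℝ) * ((k:ℝ) - 1)) / (2 * n)) /
            ((Nat.factorial (n - 1) : ℝ) * (Nat.factorial n : ℝ))) * Real.exp (-(k:ℝ)/(n:ℝ)) := by
          apply mul_le_mul (ih hkn') step1 (by positivity) (by positivity)
      _ = Real.exp (-(((k:ℝ)+1) * (((k:ℝ)+1) - 1)) / (2 * n)) /
            ((Nat.factorial (n - 1) : ℝ) * (Nat.factorial n : ℝ)) := by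
          rw [div_mul_eq_mul_div, ← Real.exp_add]
          congr 1
          field_simp
          ring

private lemma exp_half_le_two : Real.exp (1/2 : ℝ) ≤ 2 := by
  have h := Real.add_one_le_exp (-(1/2) : ℝ)
  have hpos : (0:ℝ) < Real.exp (-(1/2) : ℝ) := Real.exp_pos _
  have hmul : Real.exp ((1/2:ℝ)) * Real.exp ((-(1/2):ℝ)) = 1 := by
    rw [← Real.exp_add]; norm_num
  nlinarith

/-- Geometric-type bound: `∑_{k=1}^n exp(-k(k-1)/(2n)) ≤ 4√n`. -/
private lemma exp_sum_le (n : ℕ) (hn : 1 ≤ n) :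
    ∑ k ∈ Finset.Icc 1 n, Real.exp (-((k:ℝ) * ((k:ℝ) - 1)) / (2 * n)) ≤ 4 * Real.sqrt n := by
  have hn0 : (0:ℝ) < (n:ℝ) := by exact_mod_cast (by omega : 0 < n)
  set s : ℝ := Real.sqrt n with hs
  have hs_pos : 0 < s := Real.sqrt_pos.mpr hn0
  have hs_sq : s * s = (n:ℝ) := Real.mul_self_sqrt hn0.le
  have hs1 : 1 ≤ s := by
    nlinarith [(by exact_mod_cast hn : (1:ℝ) ≤ (n:ℝ))]
  set q : ℝ := Real.exp (-(1/s)) with hq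
  have hq_pos : 0 < q := Real.exp_pos _
  have hq_lt : q < 1 := by
    rw [hq]
    exact Real.exp_lt_one_iff.mpr (neg_lt_zero.mpr (by positivity))
  have hpt : ∀ k ∈ Finset.Icc 1 n,
      Real.exp (-((k:ℝ) * ((k:ℝ) - 1)) / (2 * n)) ≤ Real.exp (1/2 : ℝ) * q ^ (k - 1) := by
    intro k hk
    simp only [Finset.mem_Icc] at hk
    have hk1 : (1:ℝ) ≤ (k:ℝ) := by exact_mod_cast hk.1
    have hu : (0:ℝ) ≤ (k:ℝ) - 1 := by linarith
    have hqpow : q ^ (k-1) = Real.exp (-(((k:ℝ) - 1)/s)) := by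
      rw [hq, ← Real.exp_nat_mul]
      congr 1
      have hc : ((k - 1 : ℕ) : ℝ) = (k:ℝ) - 1 := by
        push_cast [Nat.cast_sub hk.1]; ring
      rw [← hc]
      ring
    rw [hqpow, ← Real.exp_add, Real.exp_le_exp, ← hs_sq]
    have expand : 1/2 + -(((k:ℝ)-1)/s) - (-((k:ℝ)*((k:ℝ)-1))/(2*(s*s)))
        = ((s - ((k:ℝ)-1))^2 + ((k:ℝ)-1)) / (2*(s*s)) := by
      field_simp
      ring
    have hnn : 0 ≤ ((s - ((k:ℝ)-1))^2 + ((k:ℝ)-1)) / (2*(s*s)) := by positivity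
    rw [← expand] at hnn
    linarith
  calc ∑ k ∈ Finset.Icc 1 n, Real.exp (-((k:ℝ) * ((k:ℝ) - 1)) / (2 * n))
      ≤ ∑ k ∈ Finset.Icc 1 n, Real.exp (1/2 : ℝ) * q ^ (k - 1) := Finset.sum_le_sum hpt
    _ = Real.exp (1/2 : ℝ) * ∑ k ∈ Finset.Icc 1 n, q ^ (k - 1) := by rw [Finset.mul_sum]
    _ ≤ Real.exp (1/2 : ℝ) * (2 * s) := by
        apply mul_le_mul_of_nonneg_left _ (Real.exp_pos _).le
        have hre : ∑ k ∈ Finset.Icc 1 n, q ^ (k - 1) = ∑ j ∈ Finset.range n, q ^ j := by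
          rw [← Finset.Ico_add_one_right_eq_Icc, Finset.sum_Ico_eq_sum_range]
          simp
        rw [hre]
        have hgeom : ∑ j ∈ Finset.range n, q ^ j = (1 - q ^ n)/(1 - q) := by
          rw [geom_sum_eq (ne_of_lt hq_lt) n, ← neg_sub (q^n) 1, ← neg_sub q 1, neg_div_neg_eq]
        have h1q : (0:ℝ) < 1 - q := by linarith
        have hb1 : ∑ j ∈ Finset.range n, q ^ j ≤ 1 / (1 - q) := by
          rw [hgeom]
          have hqn : (1 - q ^ n) ≤ 1 := by
            have : 0 ≤ q ^ n := le_of_lt (pow_pos hq_pos n)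
            linarith
          gcongr
        have hq_le : q ≤ 1 / (1 + 1/s) := by
          have h1 : 1 + 1/s ≤ Real.exp (1/s) := by
            linarith [Real.add_one_le_exp (1/s : ℝ)]
          rw [hq, Real.exp_neg]
          rw [inv_eq_one_div]
          exact one_div_le_one_div_of_le (by positivity) h1
        have h6 : (1:ℝ)/(2*s) ≤ 1 - q := by
          have he : 1 - 1 / (1 + 1/s) = (1/s)/(1 + 1/s) := by
            field_simp
            ring
          have h7 : (1/s)/(1 + 1/s) ≥ (1/s)/2 := by
            apply div_le_div_of_nonneg_left (by positivity) (by positivity) (by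
              have : 1/s ≤ 1 := by rw [div_le_one hs_pos]; exact hs1
              linarith)
          have h8 : (1/s)/2 = 1/(2*s) := by
            rw [div_div, one_div, one_div, mul_comm]
          linarith [hq_le, he ▸ (by linarith [hq_le] : (1:ℝ) - q ≥ 1 - 1/(1+1/s))]
        calc ∑ j ∈ Finset.range n, q ^ j ≤ 1/(1-q) := hb1
          _ ≤ 1/(1/(2*s)) := one_div_le_one_div_of_le (by positivity) h6
          _ = 2*s := by rw [one_div_one_div]
    _ ≤ 4 * s := by nlinarith [exp_half_le_two, hs_pos]

/-- telescoping of log over odd numbers -/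
private lemma logtel : ∀ k : ℕ, 1 ≤ k → Real.log (2*(k:ℝ)-1)
    = ∑ i ∈ Finset.Icc 1 (k-1), (Real.log (2*(i:ℝ)+1) - Real.log (2*(i:ℝ)-1)) := by
  intro k hk
  induction k, hk using Nat.le_induction with
  | base =>
    rw [show (2*((1:ℕ):ℝ)-1) = 1 by norm_num, Real.log_one, show (1:ℕ)-1 = 0 from rfl]
    simp
  | succ k hk ih =>
    obtain ⟨j, rfl⟩ : ∃ j, k = j + 1 := ⟨k - 1, by omega⟩
    simp only [Nat.add_sub_cancel] at ih ⊢
    rw [Finset.sum_Icc_succ_top (by omega : 1 ≤ j + 1), ← ih]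
    have e1 : 2*(((j:ℕ)+1+1:ℕ):ℝ)-1 = 2*(((j:ℕ)+1:ℕ):ℝ)+1 := by push_cast; ring
    rw [e1]
    ring

private lemma S_bound (n : ℕ) (hn : 2 ≤ n) :
    |∑ k ∈ Finset.Icc 1 n, ((-1:ℝ) ^ k * (2 * (k : ℝ) - 1) /
        ((Nat.factorial (n - k) : ℝ) * (Nat.factorial (k + n - 1) : ℝ))) * Real.log k|
      ≤ 12 * Real.sqrt n / ((Nat.factorial (n - 1) : ℝ) * (Nat.factorial n : ℝ)) := by
  have hn1 : 1 ≤ n := by omega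
  set F : ℕ → ℝ := fun m => (Nat.factorial m : ℝ) with hF
  set c : ℕ → ℝ := fun k => (-1:ℝ) ^ k * (2 * (k : ℝ) - 1) / (F (n - k) * F (k + n - 1)) with hc
  set dd : ℕ → ℝ := fun k => 1 / (F (n - k) * F (k + n - 1)) with hdd
  have hdd_pos : ∀ k, 0 < dd k := by
    intro k
    have := fact_pos (n - k); have := fact_pos (k + n - 1)
    rw [hdd]; positivity
  -- total sum of coefficients vanishes
  have hD : ∑ k ∈ Finset.Icc 1 n, c k = 0 := by
    rw [hc]
    rw [tele n hn n hn1 le_rfl]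
    rw [Nat.sub_self]
    simp
  -- split the logarithm
  have hlog : ∀ k ∈ Finset.Icc 1 n, Real.log k
      = Real.log (2*(k:ℝ)-1) + (Real.log (2*(k:ℝ)) - Real.log (2*(k:ℝ)-1)) - Real.log 2 := by
    intro k hk
    simp only [Finset.mem_Icc] at hk
    have hk0 : (k:ℝ) ≠ 0 := by
      have : (1:ℝ) ≤ (k:ℝ) := by exact_mod_cast hk.1
      linarith
    have h2k : Real.log (2*(k:ℝ)) = Real.log 2 + Real.log k := Real.log_mul (by norm_num) hk0
    rw [h2k]; ring
  have hsplit : ∑ k ∈ Finset.Icc 1 n, c k * Real.log k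
      = (∑ k ∈ Finset.Icc 1 n, c k * Real.log (2*(k:ℝ)-1))
        + (∑ k ∈ Finset.Icc 1 n, c k * (Real.log (2*(k:ℝ)) - Real.log (2*(k:ℝ)-1)))
        - Real.log 2 * ∑ k ∈ Finset.Icc 1 n, c k := by
    rw [Finset.mul_sum, ← Finset.sum_add_distrib, ← Finset.sum_sub_distrib]
    apply Finset.sum_congr rfl
    intro k hk
    rw [hlog k hk]
    ring
  rw [hsplit, hD, mul_zero, sub_zero]
  -- E-part bound
  have hE : |∑ k ∈ Finset.Icc 1 n, c k * (Real.log (2*(k:ℝ)) - Real.log (2*(k:ℝ)-1))|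
      ≤ ∑ k ∈ Finset.Icc 1 n, dd k := by
    apply (Finset.abs_sum_le_sum_abs _ _).trans
    apply Finset.sum_le_sum
    intro k hk
    simp only [Finset.mem_Icc] at hk
    have hk1 : (1:ℝ) ≤ (k:ℝ) := by exact_mod_cast hk.1
    have hden : (0:ℝ) < 2*(k:ℝ)-1 := by linarith
    have hnum : (0:ℝ) < 2*(k:ℝ) := by linarith
    have hlogpos : 0 ≤ Real.log (2*(k:ℝ)) - Real.log (2*(k:ℝ)-1) := by
      have := Real.log_le_log hden (by linarith : 2*(k:ℝ)-1 ≤ 2*(k:ℝ))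
      linarith
    have hfApos : (0:ℝ) < F (n-k) * F (k+n-1) := mul_pos (fact_pos _) (fact_pos _)
    have habs_c : |c k| = (2*(k:ℝ)-1) * dd k := by
      rw [hc, hdd]
      simp only
      rw [abs_div, abs_mul, abs_pow, abs_neg, abs_one, one_pow, one_mul]
      rw [abs_of_pos hden, abs_of_pos hfApos]
      rw [div_eq_mul_one_div]
    rw [abs_mul, habs_c, abs_of_nonneg hlogpos]
    have hdiff_le : Real.log (2*(k:ℝ)) - Real.log (2*(k:ℝ)-1) ≤ 1/(2*(k:ℝ)-1) := by
      rw [← Real.log_div hnum.ne' hden.ne']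
      have h1 := Real.log_le_sub_one_of_pos (show (0:ℝ) < (2*(k:ℝ))/(2*(k:ℝ)-1) by positivity)
      have h2 : (2*(k:ℝ))/(2*(k:ℝ)-1) - 1 = 1/(2*(k:ℝ)-1) := by
        field_simp
        ring
      linarith
    calc (2*(k:ℝ)-1) * dd k * (Real.log (2*(k:ℝ)) - Real.log (2*(k:ℝ)-1))
        ≤ (2*(k:ℝ)-1) * dd k * (1/(2*(k:ℝ)-1)) := by
          apply mul_le_mul_of_nonneg_left hdiff_le
          exact mul_nonneg (by linarith) (hdd_pos k).le
      _ = dd k := by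
          field_simp
  -- M-part
  have hM1 : ∑ k ∈ Finset.Icc 1 n, c k * Real.log (2*(k:ℝ)-1)
      = ∑ i ∈ Finset.Icc 1 (n-1), (∑ k ∈ Finset.Icc (i+1) n, c k)
          * (Real.log (2*(i:ℝ)+1) - Real.log (2*(i:ℝ)-1)) := by
    calc ∑ k ∈ Finset.Icc 1 n, c k * Real.log (2*(k:ℝ)-1)
        = ∑ k ∈ Finset.Icc 1 n, ∑ i ∈ Finset.Icc 1 (k-1),
            c k * (Real.log (2*(i:ℝ)+1) - Real.log (2*(i:ℝ)-1)) := by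
          apply Finset.sum_congr rfl
          intro k hk
          simp only [Finset.mem_Icc] at hk
          rw [logtel k hk.1, Finset.mul_sum]
      _ = ∑ i ∈ Finset.Icc 1 (n-1), ∑ k ∈ Finset.Icc (i+1) n,
            c k * (Real.log (2*(i:ℝ)+1) - Real.log (2*(i:ℝ)-1)) := by
          apply Finset.sum_comm'
          intro k i
          simp only [Finset.mem_Icc]
          omega
      _ = _ := by
          apply Finset.sum_congr rfl
          intro i hi
          rw [← Finset.sum_mul]
  have hTail : ∀ i, 1 ≤ i → i ≤ n →
      ∑ k ∈ Finset.Icc (i+1) n, c k = - ∑ k ∈ Finset.Icc 1 i, c k := by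
    intro i h1 h2
    have hcons := Finset.sum_Ioc_consecutive (fun k => c k) (by omega : 0 ≤ i) h2
    have e1 : Finset.Icc 1 i = Finset.Ioc 0 i := by rw [← Finset.Icc_add_one_left_eq_Ioc, zero_add]
    have e2 : Finset.Icc (i+1) n = Finset.Ioc i n := by rw [← Finset.Icc_add_one_left_eq_Ioc]
    have e3 : Finset.Icc 1 n = Finset.Ioc 0 n := by rw [← Finset.Icc_add_one_left_eq_Ioc, zero_add]
    rw [e3] at hD
    rw [e1, e2]
    rw [hD] at hcons
    linarith
  have hM : |∑ k ∈ Finset.Icc 1 n, c k * Real.log (2*(k:ℝ)-1)|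
      ≤ 2 * ∑ k ∈ Finset.Icc 1 n, dd k := by
    rw [hM1]
    apply (Finset.abs_sum_le_sum_abs _ _).trans
    have step : ∀ i ∈ Finset.Icc 1 (n-1),
        |(∑ k ∈ Finset.Icc (i+1) n, c k) * (Real.log (2*(i:ℝ)+1) - Real.log (2*(i:ℝ)-1))|
          ≤ 2 * dd i := by
      intro i hi
      simp only [Finset.mem_Icc] at hi
      have hi1 : (1:ℝ) ≤ (i:ℝ) := by exact_mod_cast hi.1
      have hin : i ≤ n := by omega
      have hden : (0:ℝ) < 2*(i:ℝ)-1 := by linarith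
      have hnum : (0:ℝ) < 2*(i:ℝ)+1 := by linarith
      have hNpos : (0:ℝ) < (n:ℝ) - 1 := by
        have : (2:ℝ) ≤ (n:ℝ) := by exact_mod_cast hn
        linarith
      have hr_nonneg : 0 ≤ Real.log (2*(i:ℝ)+1) - Real.log (2*(i:ℝ)-1) := by
        have := Real.log_le_log hden (by linarith : 2*(i:ℝ)-1 ≤ 2*(i:ℝ)+1)
        linarith
      have hr_le : Real.log (2*(i:ℝ)+1) - Real.log (2*(i:ℝ)-1) ≤ 2/(2*(i:ℝ)-1) := by
        rw [← Real.log_div hnum.ne' hden.ne']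
        have h1 := Real.log_le_sub_one_of_pos (show (0:ℝ) < (2*(i:ℝ)+1)/(2*(i:ℝ)-1) by positivity)
        have h2 : (2*(i:ℝ)+1)/(2*(i:ℝ)-1) - 1 = 2/(2*(i:ℝ)-1) := by
          field_simp
          ring
        linarith
      have habsT : |∑ k ∈ Finset.Icc (i+1) n, c k|
          = (i:ℝ) * ((n - i : ℕ) : ℝ) / (((n:ℝ) - 1) * F (n - i) * F (i + n - 1)) := by
        rw [hTail i hi.1 hin, abs_neg, hc, tele n hn i hi.1 hin]
        have hdenpos : (0:ℝ) < ((n:ℝ) - 1) * F (n - i) * F (i + n - 1) := by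
          have := fact_pos (n - i); have := fact_pos (i + n - 1)
          positivity
        have hnumnn : (0:ℝ) ≤ (i:ℝ) * ((n - i : ℕ) : ℝ) := by positivity
        rw [abs_div, abs_mul, abs_pow, abs_neg, abs_one, one_pow, one_mul]
        rw [abs_of_nonneg hnumnn, abs_of_pos hdenpos]
      rw [abs_mul, habsT, abs_of_nonneg hr_nonneg]
      have hfApos : (0:ℝ) < F (n-i) * F (i+n-1) := mul_pos (fact_pos _) (fact_pos _)
      have hni_le : ((n - i : ℕ) : ℝ) ≤ (n:ℝ) - 1 := by
        have h' : n - i ≤ n - 1 := by omega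
        have : ((n - i : ℕ) : ℝ) ≤ ((n - 1 : ℕ) : ℝ) := by exact_mod_cast h'
        have hcast : ((n - 1 : ℕ) : ℝ) = (n:ℝ) - 1 := by
          push_cast [Nat.cast_sub (by omega : 1 ≤ n)]; ring
        linarith [hcast ▸ this]
      calc (i:ℝ) * ((n - i : ℕ) : ℝ) / (((n:ℝ) - 1) * F (n - i) * F (i + n - 1))
            * (Real.log (2*(i:ℝ)+1) - Real.log (2*(i:ℝ)-1))
          ≤ (i:ℝ) * ((n - i : ℕ) : ℝ) / (((n:ℝ) - 1) * F (n - i) * F (i + n - 1))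
            * (2/(2*(i:ℝ)-1)) := by
            apply mul_le_mul_of_nonneg_left hr_le
            positivity
        _ ≤ 2 * dd i := by
            rw [hdd]
            simp only
            rw [div_mul_div_comm, mul_one_div, div_le_div_iff₀ (by positivity) hfApos]
            have hnn : (0:ℝ) ≤ ((n-i:ℕ):ℝ) := by positivity
            have h2i : (i:ℝ) ≤ 2*(i:ℝ)-1 := by linarith
            nlinarith [hfApos, mul_le_mul h2i hni_le hnn (by linarith : (0:ℝ) ≤ 2*(i:ℝ)-1)]
    apply (Finset.sum_le_sum step).trans
    rw [← Finset.mul_sum]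
    have hsub : ∑ i ∈ Finset.Icc 1 (n-1), dd i ≤ ∑ i ∈ Finset.Icc 1 n, dd i := by
      apply Finset.sum_le_sum_of_subset_of_nonneg
      · apply Finset.Icc_subset_Icc_right; omega
      · intro i _ _; exact (hdd_pos i).le
    linarith [hsub]
  -- sum of dd bound
  have hdds : ∑ k ∈ Finset.Icc 1 n, dd k
      ≤ 4 * Real.sqrt n / (F (n-1) * F n) := by
    have hFF : (0:ℝ) < F (n-1) * F n := mul_pos (fact_pos _) (fact_pos _)
    calc ∑ k ∈ Finset.Icc 1 n, dd k
        ≤ ∑ k ∈ Finset.Icc 1 n, Real.exp (-((k:ℝ) * ((k:ℝ) - 1)) / (2 * n)) / (F (n-1) * F n) := by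
          apply Finset.sum_le_sum
          intro k hk
          simp only [Finset.mem_Icc] at hk
          exact dd_le n hn1 k hk.1 hk.2
      _ = (∑ k ∈ Finset.Icc 1 n, Real.exp (-((k:ℝ) * ((k:ℝ) - 1)) / (2 * n))) / (F (n-1) * F n) := by
          rw [Finset.sum_div]
      _ ≤ 4 * Real.sqrt n / (F (n-1) * F n) := by
          gcongr
          exact exp_sum_le n hn1
  calc |(∑ k ∈ Finset.Icc 1 n, c k * Real.log (2*(k:ℝ)-1))
        + ∑ k ∈ Finset.Icc 1 n, c k * (Real.log (2*(k:ℝ)) - Real.log (2*(k:ℝ)-1))|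
      ≤ |∑ k ∈ Finset.Icc 1 n, c k * Real.log (2*(k:ℝ)-1)|
        + |∑ k ∈ Finset.Icc 1 n, c k * (Real.log (2*(k:ℝ)) - Real.log (2*(k:ℝ)-1))| := abs_add_le _ _
    _ ≤ 3 * ∑ k ∈ Finset.Icc 1 n, dd k := by linarith
    _ ≤ 3 * (4 * Real.sqrt n / (F (n-1) * F n)) := by linarith [hdds]
    _ = 12 * Real.sqrt n / (F (n-1) * F n) := by ring


private lemma sum_inv_sq_le (m : ℕ) : ∑ k ∈ Finset.Icc 1 m, (1:ℝ)/(k:ℝ)^2 ≤ 2 - 2/((m:ℝ)+1) := by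
  induction m with
  | zero => simp
  | succ m ih =>
    rw [Finset.sum_Icc_succ_top (by omega : 1 ≤ m + 1)]
    have hm1 : (0:ℝ) < (m:ℝ) + 1 := by positivity
    have hm2 : (0:ℝ) < (m:ℝ) + 2 := by linarith
    have key : (1:ℝ)/((m:ℝ)+1)^2 ≤ 2/((m:ℝ)+1) - 2/((m:ℝ)+2) := by
      have e : 2/((m:ℝ)+1) - 2/((m:ℝ)+2) = 2/(((m:ℝ)+1)*((m:ℝ)+2)) := by
        field_simp
        ring
      rw [e, div_le_div_iff₀ (by positivity) (by positivity)]
      nlinarith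
    push_cast
    have e2 : ((m:ℝ) + 1 + 1) = (m:ℝ) + 2 := by ring
    rw [e2]
    linarith [ih, key]
  
private lemma lambdaP_bound (n : ℕ) (x : ℝ) :
    |lambdaP n x| ≤ |x| * Real.exp (2 * x^2) * ((Nat.factorial (n-1) : ℝ))^2 := by
  rw [lambdaP, abs_mul]
  have h1 : |∏ k ∈ Finset.Icc 1 (n - 1), (x ^ 2 - (k : ℝ) ^ 2)|
      ≤ Real.exp (2 * x^2) * ((Nat.factorial (n-1) : ℝ))^2 := by
    rw [Finset.abs_prod]
    have h2 : ∀ k ∈ Finset.Icc 1 (n-1), |x ^ 2 - (k : ℝ) ^ 2|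
        ≤ (k:ℝ)^2 * Real.exp (x^2/(k:ℝ)^2) := by
      intro k hk
      simp only [Finset.mem_Icc] at hk
      have hk1 : (1:ℝ) ≤ (k:ℝ) := by exact_mod_cast hk.1
      have hk2 : (0:ℝ) < (k:ℝ)^2 := by positivity
      have e1 : |x ^ 2 - (k : ℝ) ^ 2| ≤ x^2 + (k:ℝ)^2 := by
        rw [abs_le]
        constructor <;> nlinarith [sq_nonneg x]
      have e2 : x^2 + (k:ℝ)^2 = (k:ℝ)^2 * (1 + x^2/(k:ℝ)^2) := by
        field_simp
        ring
      have e3 : 1 + x^2/(k:ℝ)^2 ≤ Real.exp (x^2/(k:ℝ)^2) := by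
        linarith [Real.add_one_le_exp (x^2/(k:ℝ)^2)]
      calc |x ^ 2 - (k : ℝ) ^ 2| ≤ x^2 + (k:ℝ)^2 := e1
        _ = (k:ℝ)^2 * (1 + x^2/(k:ℝ)^2) := e2
        _ ≤ (k:ℝ)^2 * Real.exp (x^2/(k:ℝ)^2) := by
            apply mul_le_mul_of_nonneg_left e3 hk2.le
    calc ∏ k ∈ Finset.Icc 1 (n-1), |x ^ 2 - (k : ℝ) ^ 2|
        ≤ ∏ k ∈ Finset.Icc 1 (n-1), (k:ℝ)^2 * Real.exp (x^2/(k:ℝ)^2) := by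
          apply Finset.prod_le_prod
          · intro k _; exact abs_nonneg _
          · exact h2
      _ = (∏ k ∈ Finset.Icc 1 (n-1), (k:ℝ)^2) * ∏ k ∈ Finset.Icc 1 (n-1), Real.exp (x^2/(k:ℝ)^2) := by
          rw [Finset.prod_mul_distrib]
      _ ≤ ((Nat.factorial (n-1) : ℝ))^2 * Real.exp (2 * x^2) := by
          have p1 : ∏ k ∈ Finset.Icc 1 (n-1), (k:ℝ)^2 = ((Nat.factorial (n-1) : ℝ))^2 := by
            have hp : ∏ k ∈ Finset.Icc 1 (n-1), (k:ℝ) = ((Nat.factorial (n-1) : ℝ)) := by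
              rw [← Nat.cast_prod]
              congr 1
              rw [← Finset.Ico_add_one_right_eq_Icc]
              exact Finset.prod_Ico_id_eq_factorial (n-1)
            calc ∏ k ∈ Finset.Icc 1 (n-1), (k:ℝ)^2
                = (∏ k ∈ Finset.Icc 1 (n-1), (k:ℝ))^2 := Finset.prod_pow _ 2 _
              _ = ((Nat.factorial (n-1) : ℝ))^2 := by rw [hp]
          have p2 : ∏ k ∈ Finset.Icc 1 (n-1), Real.exp (x^2/(k:ℝ)^2) ≤ Real.exp (2 * x^2) := by
            rw [← Real.exp_sum]
            apply Real.exp_le_exp.mpr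
            have : ∑ k ∈ Finset.Icc 1 (n-1), x^2/(k:ℝ)^2 = x^2 * ∑ k ∈ Finset.Icc 1 (n-1), 1/(k:ℝ)^2 := by
              rw [Finset.mul_sum]
              apply Finset.sum_congr rfl
              intro k _
              ring
            rw [this]
            have hs := sum_inv_sq_le (n-1)
            have h2' : ∑ k ∈ Finset.Icc 1 (n-1), (1:ℝ)/(k:ℝ)^2 ≤ 2 := by
              have : (0:ℝ) < ((n-1:ℕ):ℝ) + 1 := by positivity
              have : (0:ℝ) ≤ 2/(((n-1:ℕ):ℝ)+1) := by positivity
              linarith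
            nlinarith [sq_nonneg x, h2']
          rw [p1]
          apply mul_le_mul_of_nonneg_left p2 (by positivity)
      _ = Real.exp (2 * x^2) * ((Nat.factorial (n-1) : ℝ))^2 := by ring
  calc |x| * |∏ k ∈ Finset.Icc 1 (n - 1), (x ^ 2 - (k : ℝ) ^ 2)|
      ≤ |x| * (Real.exp (2 * x^2) * ((Nat.factorial (n-1) : ℝ))^2) := by
        apply mul_le_mul_of_nonneg_left h1 (abs_nonneg x)
    _ = |x| * Real.exp (2 * x^2) * ((Nat.factorial (n-1) : ℝ))^2 := by ring


private lemma term_bound (m : ℕ) (x : ℝ) (hm : 2 ≤ m) :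
    |lambdaTerm m x| ≤ 12 * (|x| * Real.exp (2*x^2)) * (Real.sqrt m / (m:ℝ)^2) := by
  have hm0 : (0:ℝ) < (m:ℝ) := by exact_mod_cast (by omega : 0 < m)
  have hm2 : (2:ℝ) ≤ (m:ℝ) := by exact_mod_cast hm
  have h2m : (0:ℝ) < 2*(m:ℝ)-1 := by linarith
  have hFm1 : (0:ℝ) < (Nat.factorial (m-1) : ℝ) := fact_pos _
  have hFm : (0:ℝ) < (Nat.factorial m : ℝ) := fact_pos _
  have hfactm : (m:ℝ) * (Nat.factorial (m-1) : ℝ) = (Nat.factorial m : ℝ) := by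
    exact_mod_cast congrArg (Nat.cast : ℕ → ℝ) (Nat.mul_factorial_pred (by omega : m ≠ 0))
  rw [lambdaTerm, abs_mul, abs_mul]
  have habs1 : |(-1:ℝ) ^ m / (2 * (m : ℝ) - 1)| = 1 / (2*(m:ℝ)-1) := by
    rw [abs_div, abs_pow, abs_neg, abs_one, one_pow, abs_of_pos h2m]
  rw [habs1]
  have hP := lambdaP_bound m x
  have hS := S_bound m hm
  calc 1 / (2*(m:ℝ)-1) * |lambdaP m x| * |∑ k ∈ Finset.Icc 1 m,
        ((-1:ℝ) ^ k * (2 * (k : ℝ) - 1) /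
          ((Nat.factorial (m - k) : ℝ) * (Nat.factorial (k + m - 1) : ℝ))) * Real.log k|
      ≤ 1 / (2*(m:ℝ)-1) * (|x| * Real.exp (2 * x^2) * ((Nat.factorial (m-1) : ℝ))^2)
        * (12 * Real.sqrt m / ((Nat.factorial (m-1) : ℝ) * (Nat.factorial m : ℝ))) := by
        apply mul_le_mul _ hS (abs_nonneg _) (by positivity)
        apply mul_le_mul_of_nonneg_left hP (by positivity)
    _ = 12 * (|x| * Real.exp (2*x^2)) * (Real.sqrt m / ((2*(m:ℝ)-1) * (m:ℝ))) := by
        rw [← hfactm]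
        field_simp
    _ ≤ 12 * (|x| * Real.exp (2*x^2)) * (Real.sqrt m / (m:ℝ)^2) := by
        apply mul_le_mul_of_nonneg_left _ (by positivity)
        apply div_le_div_of_nonneg_left (Real.sqrt_nonneg _) (by positivity) (by nlinarith)

theorem lambda_series_converges_absolutely (x : ℝ) :
    Summable (fun n : ℕ => |lambdaTerm (n + 1) x|) := by
  set K : ℝ := 12 * (|x| * Real.exp (2*x^2)) with hK
  have hK0 : 0 ≤ K := by positivity
  have hbound : ∀ n : ℕ, |lambdaTerm (n+1) x| ≤ K * (Real.sqrt ((n:ℝ)+1) / ((n:ℝ)+1)^2) := by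
    intro n
    have hc : (((n+1:ℕ)):ℝ) = (n:ℝ)+1 := by push_cast; ring
    rcases Nat.eq_zero_or_pos n with h0 | hpos
    · subst h0
      have hz : lambdaTerm 1 x = 0 := by
        rw [lambdaTerm]
        rw [show Finset.Icc 1 1 = {1} from rfl, Finset.sum_singleton]
        norm_num
      rw [hz]
      simp only [abs_zero]
      positivity
    · have := term_bound (n+1) x (by omega)
      rw [hc] at this
      exact this
  apply Summable.of_nonneg_of_le (fun n => abs_nonneg _) hbound
  apply Summable.mul_left
  have base : Summable (fun m : ℕ => (((m:ℝ)) ^ ((3:ℝ)/2))⁻¹) :=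
    Real.summable_nat_rpow_inv.mpr (by norm_num)
  have base1 : Summable (fun n : ℕ => ((((n+1:ℕ)):ℝ) ^ ((3:ℝ)/2))⁻¹) :=
    (summable_nat_add_iff 1).mpr base
  apply base1.congr
  intro n
  have ha : (0:ℝ) < (n:ℝ)+1 := by positivity
  have hc : (((n+1:ℕ)):ℝ) = (n:ℝ)+1 := by push_cast; ring
  rw [hc, Real.sqrt_eq_rpow, inv_eq_one_div,
    div_eq_div_iff (by positivity) (by positivity), one_mul, ← Real.rpow_add ha]
  rw [show ((n:ℝ)+1)^(2:ℕ) = ((n:ℝ)+1)^((2:ℕ):ℝ) from (Real.rpow_natCast _ 2).symm]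
  norm_num
end

section
/- Define Λ(x) = exp(S(x)), where S(x) = ∑_{n=1}^∞ [(-1)^n / (2n-1)] · p_n(x) · ∑_{k=1}^n [(-1)^k · (2k-1) / ((n-k)! · (k+n-1)!)] · ln k and p_n(x) = x · ∏_{k=1}^{n-1} (x² - k²). Then for every positive integer N, Λ(N) = N!. -/
/-- The sum `S(x) = ∑_{n=1}^∞` of the terms `lambdaTerm n x`. -/
noncomputable def lambdaS (x : ℝ) : ℝ := ∑' n : ℕ, lambdaTerm (n + 1) x

/-- The pseudogamma function `Λ(x) = exp(S(x))`. -/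
noncomputable def lambdaFn (x : ℝ) : ℝ := Real.exp (lambdaS x)


open Finset fwdDiff

lemma altZ (M m y : ℕ) (h : m < M) :
    ∑ j ∈ Finset.range (M+1), (-1:ℤ)^j * (M.choose j) * ((y+j).choose m) = 0 := by
  have hf : (fwdDiff 1)^[M] (fun x : ℕ => ((x.choose m : ℤ))) = fun _ => 0 := by
    obtain ⟨c, rfl⟩ : ∃ c, M = c + 1 + m := ⟨M - m - 1, by omega⟩
    rw [Function.iterate_add_apply]
    have h1 : (fwdDiff 1)^[m] (fun x : ℕ => ((x.choose m : ℤ))) = fun _ => 1 := by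
      simpa using fwdDiff_iter_choose 0 m
    rw [h1, Function.iterate_add_apply]
    have h2 : (fwdDiff (1:ℕ)) (fun _ : ℕ => (1:ℤ)) = fun _ => 0 := fwdDiff_const 1 1
    rw [Function.iterate_one, h2]
    exact Function.iterate_fixed (fwdDiff_const 1 0) c
  have := fwdDiff_iter_eq_sum_shift (1:ℕ) (fun x : ℕ => ((x.choose m : ℤ))) M y
  rw [hf] at this
  have h2 : (0:ℤ) = ∑ j ∈ Finset.range (M+1), (-1:ℤ)^(M-j) * (M.choose j) * ((y+j).choose m) := by
    simpa [zsmul_eq_mul, mul_assoc] using this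
  have h3 : ∀ j ∈ Finset.range (M+1), (-1:ℤ)^j * (M.choose j) * ((y+j).choose m)
      = (-1:ℤ)^M * ((-1:ℤ)^(M-j) * (M.choose j) * ((y+j).choose m)) := by
    intro j hj
    rw [Finset.mem_range] at hj
    have e : (-1:ℤ)^M * (-1:ℤ)^j = (-1:ℤ)^(M-j) := by
      rw [← pow_add]
      have : M + j = (M - j) + 2*j := by omega
      rw [this, pow_add, pow_mul, neg_one_sq, one_pow, mul_one]
    rw [← e]; ring_nf; rw [pow_mul', neg_one_sq, one_pow, mul_one]
  rw [Finset.sum_congr rfl h3, ← Finset.mul_sum, ← h2, mul_zero]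

lemma Bsum (k d : ℕ) (hk : 1 ≤ k) :
    ∑ j ∈ Finset.range (d+2),
      (-1:ℝ)^j * (Nat.factorial (2*k-1+d+j) : ℝ) /
        ((Nat.factorial (d+1-j) : ℝ) * (Nat.factorial j : ℝ) * (Nat.factorial (2*k-1+j) : ℝ)) = 0 := by
  have hz := altZ (d+1) d (2*k-1+d) (by omega)
  have hterm : ∀ j ∈ Finset.range (d+2),
      (-1:ℝ)^j * (Nat.factorial (2*k-1+d+j) : ℝ) /
        ((Nat.factorial (d+1-j) : ℝ) * (Nat.factorial j : ℝ) * (Nat.factorial (2*k-1+j) : ℝ))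
      = ((Nat.factorial d : ℝ) / (Nat.factorial (d+1) : ℝ)) *
        (((-1:ℤ)^j * ((d+1).choose j) * ((2*k-1+d+j).choose d) : ℤ) : ℝ) := by
    intro j hj
    rw [Finset.mem_range] at hj
    have h1 : j ≤ d + 1 := by omega
    have h2 : d ≤ 2*k-1+d+j := by omega
    have e1 : (((d+1).choose j : ℕ) : ℝ) = (Nat.factorial (d+1) : ℝ) /
        ((Nat.factorial j : ℝ) * (Nat.factorial (d+1-j) : ℝ)) := by
      rw [Nat.cast_choose ℝ h1]
    have e2 : (((2*k-1+d+j).choose d : ℕ) : ℝ) = (Nat.factorial (2*k-1+d+j) : ℝ) /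
        ((Nat.factorial d : ℝ) * (Nat.factorial (2*k-1+j) : ℝ)) := by
      rw [Nat.cast_choose ℝ h2, show 2*k-1+d+j-d = 2*k-1+j from by omega]
    push_cast [e1, e2]
    have p1 : (Nat.factorial (d+1) : ℝ) ≠ 0 := by positivity
    have p2 : (Nat.factorial j : ℝ) ≠ 0 := by positivity
    have p3 : (Nat.factorial (d+1-j) : ℝ) ≠ 0 := by positivity
    have p4 : (Nat.factorial d : ℝ) ≠ 0 := by positivity
    have p5 : (Nat.factorial (2*k-1+j) : ℝ) ≠ 0 := by positivity
    field_simp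
  rw [Finset.sum_congr rfl hterm, ← Finset.mul_sum, ← Int.cast_sum, hz]
  simp

lemma key (k : ℕ) (hk : 1 ≤ k) : ∀ d : ℕ,
    ∑ j ∈ Finset.range (d+1),
      ((-1:ℝ)^j * ((2*(k:ℝ)-1) / (2*((k:ℝ)+(j:ℝ))-1))) *
        ((Nat.factorial (2*k-1+d+j) : ℝ) /
          ((Nat.factorial (d-j) : ℝ) * (Nat.factorial j : ℝ) * (Nat.factorial (2*k-1+j) : ℝ))) = 1 := by
  have hk' : (1:ℝ) ≤ (k:ℝ) := by exact_mod_cast hk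
  have hne : 2*(k:ℝ)-1 ≠ 0 := by nlinarith
  intro d
  induction d with
  | zero =>
    rw [Finset.sum_range_one]
    have hf : (Nat.factorial (2*k-1) : ℝ) ≠ 0 := by positivity
    simp only [Nat.cast_zero, pow_zero, add_zero, Nat.sub_zero, Nat.factorial_zero]
    field_simp
    norm_num
  | succ d ih =>
    have hB := Bsum k d hk
    rw [Finset.sum_range_succ] at hB ⊢
    have hstep : ∀ j ∈ Finset.range (d+1),
        ((-1:ℝ)^j * ((2*(k:ℝ)-1) / (2*((k:ℝ)+(j:ℝ))-1))) *
          ((Nat.factorial (2*k-1+(d+1)+j) : ℝ) /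
            ((Nat.factorial (d+1-j) : ℝ) * (Nat.factorial j : ℝ) * (Nat.factorial (2*k-1+j) : ℝ)))
        = ((-1:ℝ)^j * ((2*(k:ℝ)-1) / (2*((k:ℝ)+(j:ℝ))-1))) *
          ((Nat.factorial (2*k-1+d+j) : ℝ) /
            ((Nat.factorial (d-j) : ℝ) * (Nat.factorial j : ℝ) * (Nat.factorial (2*k-1+j) : ℝ)))
        + (2*(k:ℝ)-1) *
          ((-1:ℝ)^j * (Nat.factorial (2*k-1+d+j) : ℝ) /
            ((Nat.factorial (d+1-j) : ℝ) * (Nat.factorial j : ℝ) * (Nat.factorial (2*k-1+j) : ℝ))) := by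
      intro j hj
      rw [Finset.mem_range] at hj
      have f1 : Nat.factorial (2*k-1+(d+1)+j) = (2*k+d+j) * Nat.factorial (2*k-1+d+j) := by
        rw [show 2*k-1+(d+1)+j = (2*k-1+d+j)+1 from by omega, Nat.factorial_succ]
        congr 1; omega
      have f2 : Nat.factorial (d+1-j) = (d+1-j) * Nat.factorial (d-j) := by
        rw [show d+1-j = (d-j)+1 from by omega, Nat.factorial_succ]
      rw [f1, f2]
      have c1 : ((d+1-j : ℕ) : ℝ) = (d:ℝ)+1-(j:ℝ) := by
        push_cast [Nat.cast_sub (by omega : j ≤ d+1)]; ring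
      have c2 : ((2*k+d+j : ℕ) : ℝ) = 2*(k:ℝ)+(d:ℝ)+(j:ℝ) := by push_cast; ring
      push_cast [c1, c2]
      have hB1 : (d:ℝ)+1-(j:ℝ) ≠ 0 := by
        have : (j:ℝ) ≤ (d:ℝ) := by exact_mod_cast Nat.lt_succ_iff.mp hj
        nlinarith
      have hkj : 2*((k:ℝ)+(j:ℝ))-1 ≠ 0 := by
        have : (0:ℝ) ≤ (j:ℝ) := Nat.cast_nonneg j
        nlinarith
      have p1 : (Nat.factorial (d-j) : ℝ) ≠ 0 := by positivity
      have p2 : (Nat.factorial j : ℝ) ≠ 0 := by positivity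
      have p3 : (Nat.factorial (2*k-1+j) : ℝ) ≠ 0 := by positivity
      have p4 : (Nat.factorial (2*k-1+d+j) : ℝ) ≠ 0 := by positivity
      field_simp
      ring
    rw [Finset.sum_congr rfl hstep, Finset.sum_add_distrib, ih]
    have hlast :
        ((-1:ℝ)^(d+1) * ((2*(k:ℝ)-1) / (2*((k:ℝ)+((d+1:ℕ):ℝ))-1))) *
          ((Nat.factorial (2*k-1+(d+1)+(d+1)) : ℝ) /
            ((Nat.factorial (d+1-(d+1)) : ℝ) * (Nat.factorial (d+1) : ℝ) * (Nat.factorial (2*k-1+(d+1)) : ℝ)))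
        = (2*(k:ℝ)-1) *
          ((-1:ℝ)^(d+1) * (Nat.factorial (2*k-1+d+(d+1)) : ℝ) /
            ((Nat.factorial (d+1-(d+1)) : ℝ) * (Nat.factorial (d+1) : ℝ) * (Nat.factorial (2*k-1+(d+1)) : ℝ))) := by
      have f1 : Nat.factorial (2*k-1+(d+1)+(d+1)) = (2*k+2*d+1) * Nat.factorial (2*k-1+d+(d+1)) := by
        rw [show 2*k-1+(d+1)+(d+1) = (2*k-1+d+(d+1))+1 from by omega, Nat.factorial_succ]
        congr 1; omega
      rw [f1, Nat.cast_mul]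
      have hden : 2*((k:ℝ)+((d+1:ℕ):ℝ))-1 ≠ 0 := by
        have : (0:ℝ) ≤ (d:ℝ) := Nat.cast_nonneg d
        nlinarith
      have c2 : ((2*k+2*d+1 : ℕ) : ℝ) = 2*((k:ℝ)+((d+1:ℕ):ℝ))-1 := by push_cast; ring
      rw [c2]
      have hG : (Nat.factorial (d+1-(d+1)) : ℝ) * (Nat.factorial (d+1) : ℝ) * (Nat.factorial (2*k-1+(d+1)) : ℝ) ≠ 0 := by positivity
      have gen : ∀ (a b f g : ℝ), b ≠ 0 → g ≠ 0 → (a/b)*((b*f)/g) = a*(f/g) := by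
        intro a b f g hb hg; field_simp
      linear_combination ((-1:ℝ)^(d+1)) * gen (2*(k:ℝ)-1) (2*((k:ℝ)+((d+1:ℕ):ℝ))-1)
        ((Nat.factorial (2*k-1+d+(d+1)) : ℝ)) _ hden hG
    rw [hlast, ← Finset.mul_sum]
    linear_combination (2*(k:ℝ)-1) * hB

lemma prodA (N : ℕ) : ∀ m, m + 1 ≤ N →
    (∏ k ∈ Finset.Icc 1 m, (N - k)) * Nat.factorial (N - (m+1)) = Nat.factorial (N - 1) := by
  intro m
  induction m with
  | zero => simp
  | succ m ih =>
    intro h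
    rw [← Finset.Ico_add_one_right_eq_Icc, Finset.prod_Ico_succ_top (by omega), Finset.Ico_add_one_right_eq_Icc]
    have e : Nat.factorial (N - (m+1)) = (N - (m+1)) * Nat.factorial (N - (m+2)) := by
      rw [show N - (m+1) = (N - (m+2)) + 1 from by omega, Nat.factorial_succ]
    calc (∏ k ∈ Finset.Icc 1 m, (N - k)) * (N - (m+1)) * Nat.factorial (N - (m+1+1))
        = (∏ k ∈ Finset.Icc 1 m, (N - k)) * ((N - (m+1)) * Nat.factorial (N - (m+2))) := by ring
      _ = (∏ k ∈ Finset.Icc 1 m, (N - k)) * Nat.factorial (N - (m+1)) := by rw [← e]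
      _ = Nat.factorial (N - 1) := ih (by omega)

lemma prodB (N : ℕ) (hN : 1 ≤ N) : ∀ m,
    Nat.factorial (N - 1) * (N * ∏ k ∈ Finset.Icc 1 m, (N + k)) = Nat.factorial (N + m) := by
  intro m
  induction m with
  | zero =>
    simp only [Finset.Icc_self, Finset.Icc_eq_empty_of_lt (by omega : (1:ℕ) > 0)]
    simp only [show Finset.Icc 1 0 = ∅ from rfl, Finset.prod_empty, mul_one, add_zero]
    rw [← Nat.succ_pred_eq_of_pos (by omega : 0 < N)]
    simp [Nat.factorial_succ, Nat.succ_pred_eq_of_pos (by omega : 0 < N)]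
    ring
  | succ m ih =>
    rw [← Finset.Ico_add_one_right_eq_Icc, Finset.prod_Ico_succ_top (by omega), Finset.Ico_add_one_right_eq_Icc]
    rw [show N + (m+1) = (N + m) + 1 from by omega, Nat.factorial_succ, ← ih]
    ring

lemma lambdaP_eq (N n : ℕ) (h1 : 1 ≤ n) (h2 : n ≤ N) :
    lambdaP n (N : ℝ) = (Nat.factorial (N + n - 1) : ℝ) / (Nat.factorial (N - n) : ℝ) := by
  have hN : 1 ≤ N := le_trans h1 h2
  have hcast : ∀ k ∈ Finset.Icc 1 (n-1), ((N:ℝ)^2 - (k:ℝ)^2)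
      = ((N - k : ℕ) : ℝ) * ((N + k : ℕ) : ℝ) := by
    intro k hk
    rw [Finset.mem_Icc] at hk
    have hkN : k ≤ N := by omega
    push_cast [Nat.cast_sub hkN]
    ring
  rw [lambdaP, Finset.prod_congr rfl hcast, Finset.prod_mul_distrib]
  rw [← Nat.cast_prod, ← Nat.cast_prod]
  have hA := prodA N (n-1) (by omega)
  rw [show n - 1 + 1 = n from by omega] at hA
  have hB := prodB N hN (n-1)
  rw [show N + (n-1) = N + n - 1 from by omega] at hB
  have hfne : (Nat.factorial (N - n) : ℝ) ≠ 0 := by positivity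
  rw [eq_div_iff hfne]
  have cA : ((∏ k ∈ Finset.Icc 1 (n-1), (N - k) : ℕ) : ℝ) * (Nat.factorial (N - n) : ℝ)
      = (Nat.factorial (N - 1) : ℝ) := by exact_mod_cast congrArg (Nat.cast : ℕ → ℝ) hA
  have cB : (Nat.factorial (N - 1) : ℝ) * ((N : ℝ) * ((∏ k ∈ Finset.Icc 1 (n-1), (N + k) : ℕ) : ℝ))
      = (Nat.factorial (N + n - 1) : ℝ) := by exact_mod_cast congrArg (Nat.cast : ℕ → ℝ) hB
  have hf1 : (Nat.factorial (N-1) : ℝ) ≠ 0 := by positivity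
  calc (N:ℝ) * (((∏ k ∈ Finset.Icc 1 (n-1), (N - k) : ℕ) : ℝ) * ((∏ k ∈ Finset.Icc 1 (n-1), (N + k) : ℕ) : ℝ)) * (Nat.factorial (N - n) : ℝ)
      = (((∏ k ∈ Finset.Icc 1 (n-1), (N - k) : ℕ) : ℝ) * (Nat.factorial (N - n) : ℝ)) * ((N:ℝ) * ((∏ k ∈ Finset.Icc 1 (n-1), (N + k) : ℕ) : ℝ)) := by ring
    _ = (Nat.factorial (N - 1) : ℝ) * ((N:ℝ) * ((∏ k ∈ Finset.Icc 1 (n-1), (N + k) : ℕ) : ℝ)) := by rw [cA]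
    _ = (Nat.factorial (N + n - 1) : ℝ) := cB

theorem lambda_interpolates_factorial (N : ℕ) (hN : 1 ≤ N) :
    lambdaFn (N : ℝ) = (Nat.factorial N : ℝ) := by
  have hfac : (0:ℝ) < (Nat.factorial N : ℝ) := by positivity
  rw [lambdaFn]
  rw [show lambdaS (N:ℝ) = Real.log (Nat.factorial N : ℝ) from ?_, Real.exp_log hfac]
  -- the series is a finite sum
  have hvanish : ∀ n, n ∉ Finset.range N → lambdaTerm (n + 1) (N:ℝ) = 0 := by
    intro n hn
    rw [Finset.mem_range, not_lt] at hn
    have hP : lambdaP (n+1) (N:ℝ) = 0 := by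
      rw [lambdaP]
      apply mul_eq_zero_of_right
      apply Finset.prod_eq_zero (i := N)
      · rw [Nat.add_sub_cancel, Finset.mem_Icc]; omega
      · ring
    rw [lambdaTerm, hP, mul_zero, zero_mul]
  rw [lambdaS, tsum_eq_sum hvanish]
  -- reindex to Ico 1 (N+1)
  have hreindex : ∑ n ∈ Finset.range N, lambdaTerm (n + 1) (N:ℝ)
      = ∑ n ∈ Finset.Ico 1 (N+1), lambdaTerm n (N:ℝ) := by
    rw [Finset.sum_Ico_eq_sum_range]
    simp only [Nat.add_sub_cancel]
    exact Finset.sum_congr rfl fun i _ => by rw [add_comm]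
  rw [hreindex]
  -- expand each term as a double sum
  have hexpand : ∀ n ∈ Finset.Ico 1 (N+1),
      lambdaTerm n (N:ℝ) = ∑ k ∈ Finset.Ico 1 (n+1),
        ((-1:ℝ) ^ n / (2 * (n : ℝ) - 1)) *
          ((Nat.factorial (N + n - 1) : ℝ) / (Nat.factorial (N - n) : ℝ)) *
          (((-1:ℝ) ^ k * (2 * (k : ℝ) - 1) /
            ((Nat.factorial (n - k) : ℝ) * (Nat.factorial (k + n - 1) : ℝ))) * Real.log (k : ℝ)) := by
    intro n hn
    rw [Finset.mem_Ico] at hn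
    rw [lambdaTerm, lambdaP_eq N n hn.1 (by omega), Finset.Ico_add_one_right_eq_Icc, Finset.mul_sum]
  rw [Finset.sum_congr rfl hexpand, ← Finset.sum_Ico_Ico_comm]
  -- inner sums equal log k
  have hinner : ∀ k ∈ Finset.Ico 1 (N+1),
      (∑ n ∈ Finset.Ico k (N+1),
        ((-1:ℝ) ^ n / (2 * (n : ℝ) - 1)) *
          ((Nat.factorial (N + n - 1) : ℝ) / (Nat.factorial (N - n) : ℝ)) *
          (((-1:ℝ) ^ k * (2 * (k : ℝ) - 1) /
            ((Nat.factorial (n - k) : ℝ) * (Nat.factorial (k + n - 1) : ℝ))) * Real.log (k : ℝ)))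
      = Real.log (k : ℝ) := by
    intro k hk
    rw [Finset.mem_Ico] at hk
    obtain ⟨hk1, hkN⟩ := hk
    set d := N - k with hd
    have hN' : N = k + d := by omega
    rw [Finset.sum_Ico_eq_sum_range, show N + 1 - k = d + 1 from by omega]
    have hterm : ∀ j ∈ Finset.range (d+1),
        ((-1:ℝ) ^ (k+j) / (2 * ((k+j : ℕ) : ℝ) - 1)) *
          ((Nat.factorial (N + (k+j) - 1) : ℝ) / (Nat.factorial (N - (k+j)) : ℝ)) *
          (((-1:ℝ) ^ k * (2 * (k : ℝ) - 1) /
            ((Nat.factorial ((k+j) - k) : ℝ) * (Nat.factorial (k + (k+j) - 1) : ℝ))) * Real.log (k : ℝ))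
        = (((-1:ℝ)^j * ((2*(k:ℝ)-1) / (2*((k:ℝ)+(j:ℝ))-1))) *
            ((Nat.factorial (2*k-1+d+j) : ℝ) /
              ((Nat.factorial (d-j) : ℝ) * (Nat.factorial j : ℝ) * (Nat.factorial (2*k-1+j) : ℝ))))
          * Real.log (k : ℝ) := by
      intro j hj
      rw [Finset.mem_range] at hj
      rw [show N + (k+j) - 1 = 2*k-1+d+j from by omega,
          show N - (k+j) = d - j from by omega,
          show (k+j) - k = j from by omega,
          show k + (k+j) - 1 = 2*k-1+j from by omega]
      have sign : (-1:ℝ) ^ (k+j) * (-1:ℝ) ^ k = (-1:ℝ) ^ j := by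
        rw [← pow_add, show k+j+k = 2*k+j from by omega, pow_add, pow_mul, neg_one_sq, one_pow, one_mul]
      have hc : ((k+j : ℕ) : ℝ) = (k:ℝ) + (j:ℝ) := by push_cast; ring
      rw [hc]
      have hkj : 2*((k:ℝ)+(j:ℝ))-1 ≠ 0 := by
        have h1 : (1:ℝ) ≤ (k:ℝ) := by exact_mod_cast hk1
        have h2 : (0:ℝ) ≤ (j:ℝ) := Nat.cast_nonneg j
        nlinarith
      rw [show ((-1:ℝ) ^ (k+j) / (2 * ((k:ℝ)+(j:ℝ)) - 1)) *
          ((Nat.factorial (2*k-1+d+j) : ℝ) / (Nat.factorial (d - j) : ℝ)) *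
          (((-1:ℝ) ^ k * (2 * (k : ℝ) - 1) /
            ((Nat.factorial j : ℝ) * (Nat.factorial (2*k-1+j) : ℝ))) * Real.log (k : ℝ))
        = ((-1:ℝ) ^ (k+j) * (-1:ℝ) ^ k) *
          (((2*(k:ℝ)-1) / (2*((k:ℝ)+(j:ℝ))-1)) *
            ((Nat.factorial (2*k-1+d+j) : ℝ) /
              ((Nat.factorial (d-j) : ℝ) * (Nat.factorial j : ℝ) * (Nat.factorial (2*k-1+j) : ℝ))) *
            Real.log (k : ℝ)) from by ring, sign]
      ring
    rw [Finset.sum_congr rfl hterm, ← Finset.sum_mul, key k hk1 d, one_mul]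
  rw [Finset.sum_congr rfl hinner]
  -- sum of logs is log of factorial
  rw [← Real.log_prod (fun k hk => by
    rw [Finset.mem_Ico] at hk
    exact Nat.cast_ne_zero.mpr (by omega))]
  congr 1
  rw [← Nat.cast_prod, Finset.prod_Ico_id_eq_factorial]
end
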